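/- Let X be a random unitary n×n matrix taking finitely many values W₁,…,Wₖ with probabilities q(a), and let M be an n×n matrix, ρ a density matrix, U a unitary. Then the expected value E[tr(XρX†M)] satisfies |E[tr(XρX†M)] − tr(UρU†M)| ≤ (δ + 2‖W̄ − U‖)·‖M‖, where W̄ = Σₐ q(a)Wₐ and δ = Σₐ q(a)‖Wₐ − W̄‖². -/

import Mathlib

open scoped Matrix.Norms.L2Operator ComplexOrder Kronecker
open Matrix Complex

/-- The positive semidefinite square root of a positive semidefinite matrix (as defined in the
older Mathlib, where it has since been removed). -/
noncomputable def Matrix.PosSemidef.sqrt {n : Type*} [Fintype n] [DecidableEq n] {A : Matrix n n ℂ}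
    (hA : A.PosSemidef) : Matrix n n ℂ :=
  hA.isHermitian.eigenvectorUnitary.1 * diagonal ((↑) ∘ (√·) ∘ hA.isHermitian.eigenvalues) *
    (star hA.isHermitian.eigenvectorUnitary : Matrix n n ℂ)

/-- The trace norm (sum of singular values) of a square complex matrix. -/
noncomputable def traceNorm {n : Type*} [Fintype n] [DecidableEq n] (A : Matrix n n ℂ) : ℝ :=
  ((Matrix.posSemidef_conjTranspose_mul_self A).sqrt.trace).re

lemma psd_sqrt_facts {n : ℕ} (ρ : Matrix (Fin n) (Fin n) ℂ) (hρ : ρ.PosSemidef) : hρ.sqrt.PosSemidef ∧ hρ.sqrt * hρ.sqrt = ρ := by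
  constructor
  · have := (posSemidef_diagonal_iff.mpr (fun i => by
        simp only [Function.comp_apply]; exact_mod_cast Real.sqrt_nonneg (hρ.isHermitian.eigenvalues i)) :
        (diagonal ((↑) ∘ (√·) ∘ hρ.isHermitian.eigenvalues) : Matrix (Fin n) (Fin n) ℂ).PosSemidef).mul_mul_conjTranspose_same
        (hρ.isHermitian.eigenvectorUnitary : Matrix (Fin n) (Fin n) ℂ)
    rw [Matrix.PosSemidef.sqrt, star_eq_conjTranspose]
    exact this
  · have hUU : (star hρ.isHermitian.eigenvectorUnitary : Matrix (Fin n) (Fin n) ℂ) *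
        hρ.isHermitian.eigenvectorUnitary = 1 := Unitary.coe_star_mul_self _
    have hDD : (diagonal ((↑) ∘ (√·) ∘ hρ.isHermitian.eigenvalues) : Matrix (Fin n) (Fin n) ℂ) *
        diagonal ((↑) ∘ (√·) ∘ hρ.isHermitian.eigenvalues) =
        diagonal (RCLike.ofReal ∘ hρ.isHermitian.eigenvalues) := by
      rw [diagonal_mul_diagonal]
      congr 1; funext i
      simp only [Function.comp_apply]
      rw [← Complex.ofReal_mul, Real.mul_self_sqrt (hρ.eigenvalues_nonneg i)]; rfl
    rw [Matrix.PosSemidef.sqrt]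
    conv_rhs => rw [hρ.isHermitian.spectral_theorem]
    rw [Unitary.conjStarAlgAut_apply, ← hDD]
    simp only [Matrix.mul_assoc]
    rw [← Matrix.mul_assoc _ _ (diagonal _ * _), hUU, Matrix.one_mul]

/-- For PSD `ρ`, `|tr (ρ C)| ≤ ‖C‖ * re (tr ρ)`. -/
lemma psd_trace_bound {n : ℕ} (ρ C : Matrix (Fin n) (Fin n) ℂ) (hρ : ρ.PosSemidef) :
    ‖(ρ * C).trace‖ ≤ ‖C‖ * ρ.trace.re := by
  set s := hρ.sqrt with hs_def
  have hs : s.PosSemidef := (psd_sqrt_facts ρ hρ).1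
  have hH : sᴴ = s := hs.1
  have hss : s * s = ρ := (psd_sqrt_facts ρ hρ).2
  set x : Fin n → EuclideanSpace ℂ (Fin n) := fun i => (WithLp.equiv 2 _).symm (fun j => s j i)
    with hx_def
  have hxval : ∀ i j, x i j = s j i := fun i j => rfl
  set T := toEuclideanCLM (n := Fin n) (𝕜 := ℂ) C with hT_def
  have hconj : ∀ i j, (starRingEnd ℂ) (s j i) = s i j := by
    intro i j
    conv_rhs => rw [← hH]
    rfl
  have hval : ∀ i j, T (x i) j = (C * s) j i := by
    intro i j
    simp only [hx_def, hT_def, WithLp.equiv_symm_apply, toEuclideanCLM_toLp]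
    simp [Matrix.toLin'_apply, Matrix.mulVec, dotProduct, Matrix.mul_apply]
  have h1 : (ρ * C).trace = ∑ i, (inner ℂ (x i) (T (x i)) : ℂ) := by
    rw [← hss, Matrix.mul_assoc, Matrix.trace_mul_comm, Matrix.mul_assoc]
    rw [Matrix.trace]
    refine Finset.sum_congr rfl fun i _ => ?_
    rw [PiLp.inner_apply]
    simp only [Matrix.diag_apply, Matrix.mul_apply]
    refine Finset.sum_congr rfl fun j _ => ?_
    simp only [RCLike.inner_apply, hval, hxval, hconj, Matrix.mul_apply]
    ring
  have h2 : ∀ i, (inner ℂ (x i) (x i) : ℂ) = (s * s).diag i := by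
    intro i
    rw [PiLp.inner_apply]
    simp only [Matrix.diag_apply, Matrix.mul_apply]
    refine Finset.sum_congr rfl fun j _ => ?_
    simp only [RCLike.inner_apply, hxval, hconj]
    ring
  have h3 : ρ.trace.re = ∑ i, ‖x i‖ ^ 2 := by
    rw [← hss, Matrix.trace, ← Finset.sum_congr rfl (fun i _ => h2 i), Complex.re_sum]
    refine Finset.sum_congr rfl fun i _ => ?_
    exact inner_self_eq_norm_sq (𝕜 := ℂ) (x i)
  rw [h1, h3, Finset.mul_sum]
  refine (norm_sum_le _ _).trans (Finset.sum_le_sum fun i _ => ?_)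
  calc ‖(inner ℂ (x i) (T (x i)) : ℂ)‖ ≤ ‖x i‖ * ‖T (x i)‖ := norm_inner_le_norm _ _
    _ ≤ ‖x i‖ * (‖T‖ * ‖x i‖) := by gcongr; exact T.le_opNorm _
    _ = ‖C‖ * ‖x i‖ ^ 2 := by rw [show ‖T‖ = ‖C‖ from rfl]; ring

lemma unitary_l2norm_le {n : ℕ} (U : Matrix (Fin n) (Fin n) ℂ)
    (hU : U ∈ Matrix.unitaryGroup (Fin n) ℂ) : ‖U‖ ≤ 1 := by
  have h1 : Uᴴ * U = 1 := by
    have := hU.1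
    rwa [Matrix.star_eq_conjTranspose] at this
  have h2 : ‖U‖ * ‖U‖ = ‖(1 : Matrix (Fin n) (Fin n) ℂ)‖ := by
    rw [← Matrix.l2_opNorm_conjTranspose_mul_self, h1]
  have h3 : ‖(1 : Matrix (Fin n) (Fin n) ℂ)‖ ≤ 1 := by
    rw [Matrix.cstar_norm_def, _root_.map_one]
    exact ContinuousLinearMap.norm_id_le
  nlinarith [norm_nonneg U]

theorem stmt_19 {n k : ℕ} (W : Fin k → Matrix (Fin n) (Fin n) ℂ)
    (hW : ∀ a, W a ∈ Matrix.unitaryGroup (Fin n) ℂ)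
    (q : Fin k → ℝ) (hq0 : ∀ a, 0 ≤ q a) (hq1 : ∑ a, q a = 1)
    (M : Matrix (Fin n) (Fin n) ℂ)
    (ρ : Matrix (Fin n) (Fin n) ℂ) (hρ : ρ.PosSemidef) (hρ1 : ρ.trace = 1)
    (U : Matrix (Fin n) (Fin n) ℂ) (hU : U ∈ Matrix.unitaryGroup (Fin n) ℂ)
    (Wbar : Matrix (Fin n) (Fin n) ℂ) (hWbar : Wbar = ∑ a, (q a : ℂ) • W a)
    (δ : ℝ) (hδ : δ = ∑ a, q a * ‖W a - Wbar‖ ^ 2) :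
    ‖(∑ a, (q a : ℂ) * (W a * ρ * (W a)ᴴ * M).trace)
        - (U * ρ * Uᴴ * M).trace‖ ≤ (δ + 2 * ‖Wbar - U‖) * ‖M‖ := by
  set D : Fin k → Matrix (Fin n) (Fin n) ℂ := fun a => W a - Wbar with hD_def
  set S : Matrix (Fin n) (Fin n) ℂ := ∑ a, (q a : ℂ) • ((W a)ᴴ * M * W a) with hS_def
  set E : Matrix (Fin n) (Fin n) ℂ := ∑ a, (q a : ℂ) • ((D a)ᴴ * M * D a) with hE_def
  have hqC : (∑ a, ((q a : ℂ))) = 1 := by exact_mod_cast hq1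
  have hDsum : ∑ a, (q a : ℂ) • D a = 0 := by
    simp only [hD_def, smul_sub, Finset.sum_sub_distrib]
    rw [← hWbar, ← Finset.sum_smul, hqC, one_smul, sub_self]
  have hDHsum : ∑ a, (q a : ℂ) • (D a)ᴴ = 0 := by
    have := congrArg Matrix.conjTranspose hDsum
    simpa [Matrix.conjTranspose_sum, Matrix.conjTranspose_smul, Complex.star_def,
      Complex.conj_ofReal] using this
  -- the algebraic identity
  have hexp : ∀ a, (W a)ᴴ * M * W a =
      (D a)ᴴ * M * D a + (Wbarᴴ * M) * D a + (D a)ᴴ * (M * Wbar) + Wbarᴴ * M * Wbar := by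
    intro a
    simp only [hD_def, Matrix.conjTranspose_sub]
    noncomm_ring
  have hS : S = E + Wbarᴴ * M * Wbar := by
    rw [hS_def, Finset.sum_congr rfl (fun a _ => congrArg ((q a : ℂ) • ·) (hexp a))]
    simp only [smul_add, Finset.sum_add_distrib]
    rw [show (∑ a, (q a : ℂ) • ((Wbarᴴ * M) * D a)) = (Wbarᴴ * M) * ∑ a, (q a : ℂ) • D a by
        rw [Finset.mul_sum]; exact Finset.sum_congr rfl fun a _ => (mul_smul_comm _ _ _).symm,
      show (∑ a, (q a : ℂ) • ((D a)ᴴ * (M * Wbar))) = (∑ a, (q a : ℂ) • (D a)ᴴ) * (M * Wbar) by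
        rw [Finset.sum_mul]; exact Finset.sum_congr rfl fun a _ => (smul_mul_assoc _ _ _).symm,
      hDsum, hDHsum, ← Finset.sum_smul, hqC]
    simp [hE_def, Matrix.mul_assoc]
  have key : S - Uᴴ * M * U = E + ((Wbar - U)ᴴ * (M * Wbar) + (Uᴴ * M) * (Wbar - U)) := by
    rw [hS]
    simp only [Matrix.conjTranspose_sub]
    noncomm_ring
  -- cyclic trace rewriting
  have cyc : ∀ V : Matrix (Fin n) (Fin n) ℂ,
      (V * ρ * Vᴴ * M).trace = (ρ * (Vᴴ * M * V)).trace := by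
    intro V
    rw [Matrix.mul_assoc (V * ρ), Matrix.trace_mul_comm, ← Matrix.mul_assoc,
      Matrix.trace_mul_comm]
  have hlhs : (∑ a, (q a : ℂ) * (W a * ρ * (W a)ᴴ * M).trace) - (U * ρ * Uᴴ * M).trace
      = (ρ * (S - Uᴴ * M * U)).trace := by
    rw [Matrix.mul_sub, Matrix.trace_sub]
    congr 1
    · rw [hS_def, Matrix.mul_sum, Matrix.trace_sum]
      refine Finset.sum_congr rfl fun a _ => ?_
      rw [mul_smul_comm, Matrix.trace_smul, cyc (W a), smul_eq_mul]
    · rw [cyc U]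
  -- norm bounds
  have hMn : (0:ℝ) ≤ ‖M‖ := norm_nonneg M
  have hWbar_le : ‖Wbar‖ ≤ 1 := by
    rw [hWbar]
    calc ‖∑ a, (q a : ℂ) • W a‖ ≤ ∑ a, ‖(q a : ℂ) • W a‖ := norm_sum_le _ _
      _ ≤ ∑ a, q a := by
          refine Finset.sum_le_sum fun a _ => ?_
          rw [norm_smul, Complex.norm_real, Real.norm_of_nonneg (hq0 a)]
          have := unitary_l2norm_le (W a) (hW a)
          nlinarith [norm_nonneg (W a), hq0 a]
      _ = 1 := hq1
  have hU_le : ‖U‖ ≤ 1 := unitary_l2norm_le U hU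
  have hE_le : ‖E‖ ≤ δ * ‖M‖ := by
    rw [hδ, Finset.sum_mul]
    refine (norm_sum_le _ _).trans (Finset.sum_le_sum fun a _ => ?_)
    rw [norm_smul, Complex.norm_real, Real.norm_of_nonneg (hq0 a)]
    have hX : ‖(D a)ᴴ * M * D a‖ ≤ ‖W a - Wbar‖ ^ 2 * ‖M‖ := by
      calc ‖(D a)ᴴ * M * D a‖ ≤ ‖(D a)ᴴ * M‖ * ‖D a‖ := Matrix.l2_opNorm_mul _ _
        _ ≤ ‖(D a)ᴴ‖ * ‖M‖ * ‖D a‖ :=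
            mul_le_mul_of_nonneg_right (Matrix.l2_opNorm_mul _ _) (norm_nonneg _)
        _ = ‖W a - Wbar‖ ^ 2 * ‖M‖ := by
            rw [Matrix.l2_opNorm_conjTranspose]
            show ‖D a‖ * ‖M‖ * ‖D a‖ = _
            rw [hD_def]; ring
    nlinarith [hq0 a, norm_nonneg ((D a)ᴴ * M * D a)]
  have h1_le : ‖(Wbar - U)ᴴ * (M * Wbar)‖ ≤ ‖Wbar - U‖ * ‖M‖ := by
    calc ‖(Wbar - U)ᴴ * (M * Wbar)‖ ≤ ‖(Wbar - U)ᴴ‖ * ‖M * Wbar‖ := Matrix.l2_opNorm_mul _ _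
      _ ≤ ‖(Wbar - U)ᴴ‖ * (‖M‖ * ‖Wbar‖) :=
          mul_le_mul_of_nonneg_left (Matrix.l2_opNorm_mul _ _) (norm_nonneg _)
      _ ≤ ‖(Wbar - U)ᴴ‖ * (‖M‖ * 1) :=
          mul_le_mul_of_nonneg_left (mul_le_mul_of_nonneg_left hWbar_le (norm_nonneg M))
            (norm_nonneg _)
      _ = ‖Wbar - U‖ * ‖M‖ := by rw [Matrix.l2_opNorm_conjTranspose, mul_one]
  have h2_le : ‖(Uᴴ * M) * (Wbar - U)‖ ≤ ‖M‖ * ‖Wbar - U‖ := by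
    calc ‖(Uᴴ * M) * (Wbar - U)‖ ≤ ‖Uᴴ * M‖ * ‖Wbar - U‖ := Matrix.l2_opNorm_mul _ _
      _ ≤ ‖Uᴴ‖ * ‖M‖ * ‖Wbar - U‖ :=
          mul_le_mul_of_nonneg_right (Matrix.l2_opNorm_mul _ _) (norm_nonneg _)
      _ ≤ 1 * ‖M‖ * ‖Wbar - U‖ := by
          refine mul_le_mul_of_nonneg_right (mul_le_mul_of_nonneg_right ?_ (norm_nonneg M))
            (norm_nonneg _)
          rw [Matrix.l2_opNorm_conjTranspose]; exact hU_le
      _ = ‖M‖ * ‖Wbar - U‖ := by ring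
  have hnorm : ‖S - Uᴴ * M * U‖ ≤ (δ + 2 * ‖Wbar - U‖) * ‖M‖ := by
    rw [key]
    calc ‖E + ((Wbar - U)ᴴ * (M * Wbar) + (Uᴴ * M) * (Wbar - U))‖
        ≤ ‖E‖ + (‖(Wbar - U)ᴴ * (M * Wbar)‖ + ‖(Uᴴ * M) * (Wbar - U)‖) :=
          (norm_add_le _ _).trans (add_le_add_right (norm_add_le _ _) _)
      _ ≤ δ * ‖M‖ + (‖Wbar - U‖ * ‖M‖ + ‖M‖ * ‖Wbar - U‖) :=
          add_le_add hE_le (add_le_add h1_le h2_le)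
      _ = (δ + 2 * ‖Wbar - U‖) * ‖M‖ := by ring
  rw [hlhs]
  have := psd_trace_bound ρ (S - Uᴴ * M * U) hρ
  rw [hρ1] at this
  simp only [Complex.one_re, mul_one] at this
  exact this.trans hnorm
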